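/- Discrete charge conservation law of the symplectic local discontinuous Galerkin method (Theorem 2.3): Let Δt > 0 and let L_f = x_{1/2} < x_{3/2} < ⋯ < x_{J+1/2} = L_r be a partition of [L_f, L_r] into cells I_j = [x_{j−1/2}, x_{j+1/2}], j = 1,…,J. For each j let u_j^n, u_j^{n+1}, ψ_j : I_j → ℂ be continuously differentiable, write u_j = (u_j^n + u_j^{n+1})/2, and let Q_h, ΔW̃ : [L_f, L_r] → ℝ be continuous. Define the numerical fluxes with periodic identification x_{1/2} ≡ x_{J+1/2}: at each interior node x_{j+1/2} set û_{j+1/2} = u_j(x_{j+1/2}) (left value) and ψ̂_{j+1/2} = ψ_{j+1}(x_{j+1/2}) (right value), and set ψ̂_{J+1/2} = ψ_1(x_{1/2}), û_{1/2} = u_J(x_{J+1/2}). Assume that for every j = 1,…,J: (E1_j) i∫_{I_j}(u_j^{n+1} − u_j^n)·conj(u_j) dx − Δt·[ψ̂_{j+1/2}·conj(u_j)(x_{j+1/2}) − ψ_j(x_{j−1/2})·conj(u_j)(x_{j−1/2})] + Δt·∫_{I_j}(ψ_j·(conj u_j)' − Q_h·u_j·conj(u_j)) dx − ∫_{I_j}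 u_j·conj(u_j)·ΔW̃ dx = 0, and (E2_j) ∫_{I_j} ψ_j·conj(ψ_j) dx + ∫_{I_j} u_j·(conj ψ_j)' dx − [u_j(x_{j+1/2})·conj(ψ_j)(x_{j+1/2}) − û_{j−1/2}·conj(ψ_j)(x_{j−1/2})] = 0. Then ∑_{j=1}^{J} ∫_{I_j} |u_j^{n+1}(x)|² dx = ∑_{j=1}^{J} ∫_{I_j} |u_j^n(x)|² dx. -/

import Mathlib

open MeasureTheory Complex ComplexConjugate

private lemma conj_intervalIntegral (f : ℝ → ℂ) (a b : ℝ) :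
    (∫ t in a..b, conj (f t)) = conj (∫ t in a..b, f t) := by
  rw [intervalIntegral, intervalIntegral, integral_conj, integral_conj, map_sub]

private lemma contDiffOn_conj {f : ℝ → ℂ} {s : Set ℝ} (hf : ContDiffOn ℝ 1 f s) :
    ContDiffOn ℝ 1 (fun y => conj (f y)) s := by
  have h : (fun y => conj (f y)) = fun y => Complex.conjCLE (f y) := by
    funext y; simp
  rw [h]
  exact Complex.conjCLE.contDiff.comp_contDiffOn hf

private lemma derivWithin_conj' {f : ℝ → ℂ} {s : Set ℝ} {t : ℝ}
    (hf : DifferentiableWithinAt ℝ f s t) (hs : UniqueDiffWithinAt ℝ s t) :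
    derivWithin (fun y => conj (f y)) s t = conj (derivWithin f s t) := by
  have h := hf.hasDerivWithinAt.star
  simp only [← starRingEnd_apply] at h
  exact h.derivWithin hs

private lemma im_mul_conj_swap (z w : ℂ) : (z * conj w).im = -(w * conj z).im := by
  simp [Complex.mul_im]; ring

private lemma re_sub_mul_conj (z w : ℂ) :
    ((z - w) * conj ((w + z) / 2)).re = (‖z‖ ^ 2 - ‖w‖ ^ 2) / 2 := by
  rw [Complex.sq_norm, Complex.sq_norm]
  simp [Complex.mul_re, Complex.sub_re, Complex.sub_im, Complex.add_re, Complex.add_im,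
    Complex.conj_re, Complex.conj_im, Complex.div_re, Complex.div_im, Complex.normSq_apply]
  ring

/-- Discrete charge conservation law of the symplectic local discontinuous Galerkin method
(Theorem 2.3).  Cells are indexed by `c = 0, …, J−1`; the cell `I_{c+1}` of the paper is
`[x c, x (c+1)]`, so `x 0 = L_f` and `x J = L_r`.  The numerical fluxes are `û = u⁻`
(value from the left cell) and `ψ̂ = ψ⁺` (value from the right cell), with periodic
identification of the endpoints `x 0 ≡ x J`.  If every cell satisfies the two LDG equations
(E1), (E2) (tested with the conjugates of `u` and `ψ`), then the discrete charge
`∑_c ∫_{I_c} |u|²` is the same at the two time levels. -/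
theorem ldg_discrete_charge_conservation
    (Δt Lf Lr : ℝ) (hΔt : 0 < Δt) (J : ℕ) (hJ : 1 ≤ J)
    (x : ℕ → ℝ) (hx : ∀ j < J, x j < x (j + 1)) (hxf : x 0 = Lf) (hxr : x J = Lr)
    (u0 u1 ψ : ℕ → ℝ → ℂ)
    (hu0 : ∀ c < J, ContDiffOn ℝ 1 (u0 c) (Set.Icc (x c) (x (c + 1))))
    (hu1 : ∀ c < J, ContDiffOn ℝ 1 (u1 c) (Set.Icc (x c) (x (c + 1))))
    (hψ : ∀ c < J, ContDiffOn ℝ 1 (ψ c) (Set.Icc (x c) (x (c + 1))))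
    (Qh ΔW : ℝ → ℝ) (hQ : Continuous Qh) (hW : Continuous ΔW)
    (u : ℕ → ℝ → ℂ) (hu : ∀ c, u c = fun t => (u0 c t + u1 c t) / 2)
    (hE1 : ∀ c < J,
      Complex.I * (∫ t in (x c)..(x (c + 1)), (u1 c t - u0 c t) * conj (u c t))
        - (Δt : ℂ) * ((if c + 1 = J then ψ 0 (x 0) else ψ (c + 1) (x (c + 1)))
              * conj (u c (x (c + 1)))
            - ψ c (x c) * conj (u c (x c)))
        + (Δt : ℂ) * (∫ t in (x c)..(x (c + 1)),
            (ψ c t * derivWithin (fun y => conj (u c y)) (Set.Icc (x c) (x (c + 1))) t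
              - (Qh t : ℂ) * (u c t * conj (u c t))))
        - (∫ t in (x c)..(x (c + 1)), u c t * conj (u c t) * (ΔW t : ℂ)) = 0)
    (hE2 : ∀ c < J,
      (∫ t in (x c)..(x (c + 1)), ψ c t * conj (ψ c t))
        + (∫ t in (x c)..(x (c + 1)),
            u c t * derivWithin (fun y => conj (ψ c y)) (Set.Icc (x c) (x (c + 1))) t)
        - (u c (x (c + 1)) * conj (ψ c (x (c + 1)))
            - (if c = 0 then u (J - 1) (x J) else u (c - 1) (x c)) * conj (ψ c (x c))) = 0) :
    ∑ c ∈ Finset.range J, ∫ t in (x c)..(x (c + 1)), ‖u1 c t‖ ^ 2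
      = ∑ c ∈ Finset.range J, ∫ t in (x c)..(x (c + 1)), ‖u0 c t‖ ^ 2 := by
  classical
  set P : ℕ → ℝ := fun c =>
    ((if c + 1 = J then ψ 0 (x 0) else ψ (c + 1) (x (c + 1))) * conj (u c (x (c + 1)))).im
    with hP
  set Pp : ℕ → ℝ := fun c =>
    (((if c = 0 then u (J - 1) (x J) else u (c - 1) (x c)) * conj (ψ c (x c)))).im with hPp
  have key : ∀ c < J,
      (∫ t in (x c)..(x (c + 1)), ‖u1 c t‖ ^ 2)
        - (∫ t in (x c)..(x (c + 1)), ‖u0 c t‖ ^ 2)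
      = 2 * Δt * (P c + Pp c) := by
    intro c hc
    have e1 := hE1 c hc
    have e2 := hE2 c hc
    simp only [hP, hPp]
    set Ψh := (if c + 1 = J then ψ 0 (x 0) else ψ (c + 1) (x (c + 1))) with hΨh
    set uh := (if c = 0 then u (J - 1) (x J) else u (c - 1) (x c)) with huh
    set a := x c with ha
    set b := x (c + 1) with hb
    have hab : a < b := hx c hc
    have hIcc : Set.uIcc a b = Set.Icc a b := Set.uIcc_of_le hab.le
    have hUD : UniqueDiffOn ℝ (Set.Icc a b) := uniqueDiffOn_Icc hab
    have intg : ∀ {f : ℝ → ℂ}, ContinuousOn f (Set.Icc a b) →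
        IntervalIntegrable f volume a b := fun h =>
      ContinuousOn.intervalIntegrable (by rwa [hIcc])
    have intgR : ∀ {f : ℝ → ℝ}, ContinuousOn f (Set.Icc a b) →
        IntervalIntegrable f volume a b := fun h =>
      ContinuousOn.intervalIntegrable (by rwa [hIcc])
    have hcu : ContDiffOn ℝ 1 (u c) (Set.Icc a b) := by
      rw [hu c]; exact ((hu0 c hc).add (hu1 c hc)).div_const 2
    have hcψ : ContDiffOn ℝ 1 (ψ c) (Set.Icc a b) := hψ c hc
    have hcuconj := contDiffOn_conj hcu
    have hcψconj := contDiffOn_conj hcψ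
    have cu : ContinuousOn (u c) (Set.Icc a b) := hcu.continuousOn
    have cψ : ContinuousOn (ψ c) (Set.Icc a b) := hcψ.continuousOn
    have cu0 : ContinuousOn (u0 c) (Set.Icc a b) := (hu0 c hc).continuousOn
    have cu1 : ContinuousOn (u1 c) (Set.Icc a b) := (hu1 c hc).continuousOn
    have cuconj : ContinuousOn (fun t => conj (u c t)) (Set.Icc a b) := hcuconj.continuousOn
    set dcu := derivWithin (fun y => conj (u c y)) (Set.Icc a b) with hdcu
    set dcψ := derivWithin (fun y => conj (ψ c y)) (Set.Icc a b) with hdcψ2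
    set dψ := derivWithin (ψ c) (Set.Icc a b) with hdψ2
    have cdcu : ContinuousOn dcu (Set.Icc a b) := hcuconj.continuousOn_derivWithin hUD le_rfl
    have cdcψ : ContinuousOn dcψ (Set.Icc a b) := hcψconj.continuousOn_derivWithin hUD le_rfl
    have cdψ : ContinuousOn dψ (Set.Icc a b) := hcψ.continuousOn_derivWithin hUD le_rfl
    have hdψconj : ∀ t ∈ Set.Icc a b, dcψ t = conj (dψ t) := fun t ht =>
      derivWithin_conj' ((hcψ.differentiableOn one_ne_zero) t ht) (hUD t ht)
    -- the ψ·conj ψ integral is real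
    have hS : (∫ t in a..b, ψ c t * conj (ψ c t))
        = ((∫ t in a..b, Complex.normSq (ψ c t) : ℝ) : ℂ) := by
      rw [← intervalIntegral.integral_ofReal]
      exact intervalIntegral.integral_congr fun t ht => (Complex.mul_conj (ψ c t))
    rw [hS] at e2
    -- value of ∫ u ⬝ (conj ψ)' from (E2)
    have huPsi : (∫ t in a..b, u c t * dcψ t)
        = u c b * conj (ψ c b) - uh * conj (ψ c a)
          - ((∫ t in a..b, Complex.normSq (ψ c t) : ℝ) : ℂ) := by
      linear_combination e2
    -- ∫ ψ' ⬝ conj u  =  conj (∫ u ⬝ (conj ψ)')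
    have hdψcu : (∫ t in a..b, dψ t * conj (u c t))
        = conj (u c b * conj (ψ c b)) - conj (uh * conj (ψ c a))
          - ((∫ t in a..b, Complex.normSq (ψ c t) : ℝ) : ℂ) := by
      have h1 : (∫ t in a..b, dψ t * conj (u c t))
          = conj (∫ t in a..b, u c t * dcψ t) := by
        rw [← conj_intervalIntegral]
        apply intervalIntegral.integral_congr
        intro t ht
        rw [hIcc] at ht
        simp only [map_mul, hdψconj t ht, Complex.conj_conj]
        ring
      rw [h1, huPsi, map_sub, map_sub, Complex.conj_ofReal]
    -- integration by parts
    have hFTC : (∫ t in a..b, (dψ t * conj (u c t) + ψ c t * dcu t))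
        = ψ c b * conj (u c b) - ψ c a * conj (u c a) := by
      apply intervalIntegral.integral_eq_sub_of_hasDeriv_right_of_le hab.le
        (cψ.mul cuconj)
      · intro t ht
        have hF : HasDerivWithinAt (fun y => ψ c y * conj (u c y))
            (dψ t * conj (u c t) + ψ c t * dcu t) (Set.Icc a b) t := by
          have ht' : t ∈ Set.Icc a b := Set.Ioo_subset_Icc_self ht
          exact (((hcψ.differentiableOn one_ne_zero) t ht').hasDerivWithinAt).mul
            (((hcuconj.differentiableOn one_ne_zero) t ht').hasDerivWithinAt)
        exact hF.mono_of_mem_nhdsWithin (Icc_mem_nhdsGT_of_mem ⟨ht.1.le, ht.2⟩)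
      · exact intg ((cdψ.mul cuconj).add (cψ.mul cdcu))
    -- value of ∫ ψ ⬝ (conj u)'
    have hI3 : (∫ t in a..b, ψ c t * dcu t)
        = -(ψ c a * conj (u c a)) + conj (uh * conj (ψ c a))
          + ((∫ t in a..b, Complex.normSq (ψ c t) : ℝ) : ℂ) := by
      have hsplit : (∫ t in a..b, (dψ t * conj (u c t) + ψ c t * dcu t))
          = (∫ t in a..b, dψ t * conj (u c t)) + (∫ t in a..b, ψ c t * dcu t) :=
        intervalIntegral.integral_add (intg (cdψ.mul cuconj)) (intg (cψ.mul cdcu))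
      have hswap : conj (u c b * conj (ψ c b)) = ψ c b * conj (u c b) := by
        rw [map_mul, Complex.conj_conj]; ring
      rw [hsplit, hdψcu] at hFTC
      linear_combination hFTC - hswap
    -- split the (E1) integral and make the real integrals explicit
    have hsplit2 : (∫ t in a..b,
          (ψ c t * dcu t - (Qh t : ℂ) * (u c t * conj (u c t))))
        = (∫ t in a..b, ψ c t * dcu t)
          - (∫ t in a..b, (Qh t : ℂ) * (u c t * conj (u c t))) :=
      intervalIntegral.integral_sub (intg (cψ.mul cdcu))
        (intg ((Complex.continuous_ofReal.comp hQ).continuousOn.mul (cu.mul cuconj)))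
    have hR : (∫ t in a..b, (Qh t : ℂ) * (u c t * conj (u c t)))
        = ((∫ t in a..b, Qh t * Complex.normSq (u c t) : ℝ) : ℂ) := by
      rw [← intervalIntegral.integral_ofReal]
      apply intervalIntegral.integral_congr
      intro t ht
      simp only [Complex.mul_conj]; push_cast; ring
    have hD : (∫ t in a..b, u c t * conj (u c t) * (ΔW t : ℂ))
        = ((∫ t in a..b, Complex.normSq (u c t) * ΔW t : ℝ) : ℂ) := by
      rw [← intervalIntegral.integral_ofReal]
      apply intervalIntegral.integral_congr
      intro t ht
      simp only [Complex.mul_conj]; push_cast; ring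
    rw [hsplit2, hI3, hR, hD] at e1
    have e1' : Complex.I * (∫ t in a..b, (u1 c t - u0 c t) * conj (u c t))
        = (Δt : ℂ) * (Ψh * conj (u c b)) - (Δt : ℂ) * conj (uh * conj (ψ c a))
          - (Δt : ℂ) * ((∫ t in a..b, Complex.normSq (ψ c t) : ℝ) : ℂ)
          + (Δt : ℂ) * ((∫ t in a..b, Qh t * Complex.normSq (u c t) : ℝ) : ℂ)
          + ((∫ t in a..b, Complex.normSq (u c t) * ΔW t : ℝ) : ℂ) := by
      linear_combination e1
    -- real part of A
    have hAre : (∫ t in a..b, (u1 c t - u0 c t) * conj (u c t)).re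
        = ∫ t in a..b, (‖u1 c t‖ ^ 2 - ‖u0 c t‖ ^ 2) / 2 := by
      have hcc := Complex.reCLM.intervalIntegral_comp_comm
        (μ := volume) (intg ((cu1.sub cu0).mul cuconj))
      simp only [Complex.reCLM_apply, Pi.mul_apply, Pi.sub_apply] at hcc
      rw [← hcc]
      apply intervalIntegral.integral_congr
      intro t ht
      simp only [hu c]
      exact re_sub_mul_conj (u1 c t) (u0 c t)
    have hhalf : (∫ t in a..b, (‖u1 c t‖ ^ 2 - ‖u0 c t‖ ^ 2) / 2)
        = ((∫ t in a..b, ‖u1 c t‖ ^ 2)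
            - ∫ t in a..b, ‖u0 c t‖ ^ 2) / 2 := by
      rw [intervalIntegral.integral_div]
      congr 1
      exact intervalIntegral.integral_sub
        (intgR ((continuous_norm.comp_continuousOn cu1).pow 2))
        (intgR ((continuous_norm.comp_continuousOn cu0).pow 2))
    -- take imaginary parts
    have him := congrArg Complex.im e1'
    simp only [Complex.mul_im, Complex.I_re, Complex.I_im, Complex.add_im, Complex.sub_im,
      Complex.ofReal_re, Complex.ofReal_im, Complex.conj_re, Complex.conj_im, zero_mul,
      one_mul, mul_zero, zero_add, add_zero, mul_one, sub_zero, zero_sub, neg_neg,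
      neg_zero] at him
    rw [hAre, hhalf] at him
    simp only [Complex.mul_im, Complex.conj_re, Complex.conj_im]
    linear_combination 2 * him
  -- sum over cells and telescope the boundary terms
  rw [← sub_eq_zero, ← Finset.sum_sub_distrib]
  rw [Finset.sum_congr rfl fun c hc => key c (Finset.mem_range.mp hc)]
  rw [← Finset.mul_sum]
  have hsum : ∑ c ∈ Finset.range J, (P c + Pp c) = 0 := by
    obtain ⟨K, rfl⟩ : ∃ K, J = K + 1 := ⟨J - 1, (Nat.succ_pred_eq_of_pos hJ).symm⟩
    rw [Finset.sum_add_distrib]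
    have hPpsum : ∑ c ∈ Finset.range (K + 1), Pp c = - ∑ c ∈ Finset.range (K + 1), P c := by
      rw [Finset.sum_range_succ' (fun c => Pp c) K, Finset.sum_range_succ (fun c => P c) K]
      have h0 : Pp 0 = - P K := by
        simp only [hPp, hP, if_pos rfl, Nat.add_sub_cancel]
        exact im_mul_conj_swap _ _
      have hstep : ∀ i ∈ Finset.range K, Pp (i + 1) = - P i := by
        intro i hi
        have hiK : i < K := Finset.mem_range.mp hi
        simp only [hPp, hP, if_neg (Nat.succ_ne_zero i), if_neg (by omega : ¬ i + 1 = K + 1),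
          Nat.add_sub_cancel]
        exact im_mul_conj_swap _ _
      rw [Finset.sum_congr rfl hstep, h0]
      rw [Finset.sum_neg_distrib]
      ring
    rw [hPpsum]; ring
  rw [hsum, mul_zero]
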